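/- (Gram-matrix law of large numbers underlying Assumption 2(i) and Proposition 2.) Let (e_{i,l})_{i∈ℕ, l∈Fin L} be an independent family of real random variables, each with law gaussianReal 0 σ_M² (mean 0, variance σ_M² > 0), on a probability space. Let θE : ℕ → Fin L → ℝ be deterministic with (1/n) Σ_{i<n} θE(i)(l) θE(i)(l') → H(l,l') as n → ∞ for all l, l' ∈ Fin L. Then for every l, l' ∈ Fin L, the random sequence (1/n) Σ_{i<n} (θE(i)(l) + e_{i,l}) (θE(i)(l') + e_{i,l'}) converges in probability to H(l,l') + σ_M² · (1 if l = l' else 0). -/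

import Mathlib

open MeasureTheory ProbabilityTheory Filter

open MeasureTheory ProbabilityTheory Filter Real Set
open scoped NNReal ENNReal

variable {v : ℝ≥0}

lemma pdf_eq (v : ℝ≥0) (x : ℝ) :
    gaussianPDFReal 0 v x = (Real.sqrt (2 * π * v))⁻¹ * Real.exp (-(2 * (v:ℝ))⁻¹ * x ^ 2) := by
  rw [gaussianPDFReal, sub_zero, neg_div, div_eq_inv_mul, neg_mul]

lemma gauss_withDensity (hv : v ≠ 0) (g : ℝ → ℝ) :
    ∫ x, g x ∂(gaussianReal 0 v) =
      ∫ x, gaussianPDFReal 0 v x * g x := by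
  rw [gaussianReal_of_var_ne_zero 0 hv]
  have h : (gaussianPDF 0 v) = fun x => ((gaussianPDFReal 0 v x).toNNReal : ℝ≥0∞) := rfl
  rw [h, integral_withDensity_eq_integral_smul
    (by exact (measurable_gaussianPDFReal 0 v).real_toNNReal) g]
  congr 1 with x
  simp [NNReal.smul_def, Real.coe_toNNReal _ (gaussianPDFReal_nonneg 0 v x)]

lemma vpos (hv : v ≠ 0) : 0 < (v : ℝ) := by
  exact_mod_cast pos_iff_ne_zero.mpr hv

lemma bpos (hv : v ≠ 0) : 0 < (2 * (v : ℝ))⁻¹ := by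
  have := vpos hv; positivity

lemma integrable_pdf_mul_sq (hv : v ≠ 0) :
    Integrable (fun x : ℝ => gaussianPDFReal 0 v x * x ^ 2) := by
  have h2 : Integrable (fun x : ℝ => x ^ (2:ℝ) * Real.exp (-(2 * (v:ℝ))⁻¹ * x ^ 2)) :=
    integrable_rpow_mul_exp_neg_mul_sq (bpos hv) (by norm_num)
  simp_rw [Real.rpow_two] at h2
  have := (h2.const_mul ((Real.sqrt (2 * π * v))⁻¹))
  apply this.congr
  filter_upwards with x
  rw [pdf_eq]; ring

lemma integrable_sq_gauss (hv : v ≠ 0) :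
    Integrable (fun x : ℝ => x ^ 2) (gaussianReal 0 v) := by
  rw [gaussianReal_of_var_ne_zero 0 hv]
  have h : (gaussianPDF 0 v) = fun x => ((gaussianPDFReal 0 v x).toNNReal : ℝ≥0∞) := rfl
  rw [h, integrable_withDensity_iff_integrable_smul
    (by exact (measurable_gaussianPDFReal 0 v).real_toNNReal)]
  apply (integrable_pdf_mul_sq hv).congr
  filter_upwards with x
  simp [NNReal.smul_def, Real.coe_toNNReal _ (gaussianPDFReal_nonneg 0 v x)]

lemma memℒp_id_gauss (hv : v ≠ 0) : MemLp id 2 (gaussianReal 0 v) := by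
  rw [memLp_two_iff_integrable_sq aestronglyMeasurable_id]
  exact integrable_sq_gauss hv

lemma integrable_id_gauss (hv : v ≠ 0) : Integrable id (gaussianReal 0 v) :=
  (memℒp_id_gauss hv).integrable one_le_two

lemma integral_id_gauss (hv : v ≠ 0) : ∫ x, x ∂(gaussianReal 0 v) = 0 := by
  have hmap : (gaussianReal 0 v).map ((-1 : ℝ) * ·) = gaussianReal 0 v := by
    rw [gaussianReal_map_const_mul]
    norm_num
  have h := integral_map (μ := gaussianReal 0 v)
    (φ := ((-1 : ℝ) * ·)) (measurable_id.const_mul _).aemeasurable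
    (f := fun x : ℝ => x) aestronglyMeasurable_id
  rw [hmap] at h
  simp only [neg_one_mul] at h
  rw [integral_neg] at h
  linarith [h]

lemma integral_sq_gauss (hv : v ≠ 0) : ∫ x, x ^ 2 ∂(gaussianReal 0 v) = v := by
  rw [gauss_withDensity hv (fun x => x ^ 2)]
  have hs : (0:ℝ) < 2 * (v:ℝ) := by have := vpos hv; positivity
  have hb : (0:ℝ) < (2 * (v:ℝ))⁻¹ := bpos hv
  have key : ∫ x : ℝ, x ^ 2 * Real.exp (-(2 * (v:ℝ))⁻¹ * x ^ 2) =
      2 * ((2 * (v:ℝ))⁻¹ ^ (-(2 + 1) / 2 : ℝ) * (1 / 2) * Real.Gamma ((2 + 1) / 2)) := by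
    have habs := integral_comp_abs (f := fun t : ℝ => t ^ 2 * Real.exp (-(2 * (v:ℝ))⁻¹ * t ^ 2))
    simp only [sq_abs] at habs
    rw [habs]
    congr 1
    have := integral_rpow_mul_exp_neg_mul_rpow (p := 2) (q := 2) (b := (2 * (v:ℝ))⁻¹)
      two_pos (by norm_num) hb
    simp_rw [Real.rpow_two] at this
    rw [this]
  have hpdf : ∀ x : ℝ, gaussianPDFReal 0 v x * x ^ 2 =
      (Real.sqrt (2 * π * v))⁻¹ * (x ^ 2 * Real.exp (-(2 * (v:ℝ))⁻¹ * x ^ 2)) := by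
    intro x; rw [pdf_eq]; ring
  simp_rw [hpdf]
  rw [MeasureTheory.integral_const_mul, key]
  have hgamma : Real.Gamma ((2 + 1) / 2) = (1 / 2) * Real.sqrt π := by
    have h12 : ((2:ℝ) + 1) / 2 = 1 / 2 + 1 := by norm_num
    rw [h12, Real.Gamma_add_one (by norm_num), Real.Gamma_one_half_eq]
  rw [hgamma]
  have hrw : ((2 * (v:ℝ))⁻¹ : ℝ) ^ (-(2 + 1) / 2 : ℝ) =
      (2 * (v:ℝ)) * (2 * (v:ℝ)) ^ (1 / 2 : ℝ) := by
    have h32 : (-(2 + 1) / 2 : ℝ) = -(3/2) := by norm_num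
    rw [h32, Real.inv_rpow hs.le, Real.rpow_neg hs.le, inv_inv,
      show (3/2 : ℝ) = 1 + 1/2 by norm_num, Real.rpow_add hs, Real.rpow_one]
  rw [hrw]
  have hsqrt : Real.sqrt (2 * π * v) = Real.sqrt π * (2 * (v:ℝ)) ^ (1/2 : ℝ) := by
    rw [show (2 * π * (v:ℝ)) = π * (2 * v) by ring, Real.sqrt_mul Real.pi_pos.le]
    simp [Real.sqrt_eq_rpow]
  rw [hsqrt]
  have hA : Real.sqrt π ≠ 0 := by positivity
  have hB : (2 * (v:ℝ)) ^ (1/2 : ℝ) ≠ 0 := by positivity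
  field_simp

section Helpers
variable {Ω : Type*} [MeasurableSpace Ω] {P : Measure Ω} [IsProbabilityMeasure P]

lemma tim_add {f g : ℕ → Ω → ℝ} {F G : Ω → ℝ}
    (hf : TendstoInMeasure P f atTop F) (hg : TendstoInMeasure P g atTop G) :
    TendstoInMeasure P (fun n ω => f n ω + g n ω) atTop (fun ω => F ω + G ω) := by
  intro ε hε
  have A := hf (ε / 2) (ENNReal.half_pos hε.ne')
  have B := hg (ε / 2) (ENNReal.half_pos hε.ne')
  refine tendsto_of_tendsto_of_tendsto_of_le_of_le tendsto_const_nhds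
    (by simpa using A.add B) (fun n => zero_le) (fun n => ?_)
  refine le_trans (measure_mono ?_) (measure_union_le _ _)
  intro ω hω
  simp only [Set.mem_setOf_eq, Set.mem_union] at hω ⊢
  by_contra hcon
  push_neg at hcon
  have hd := dist_add_add_le (f n ω) (g n ω) (F ω) (G ω)
  have h1 := hcon.1
  have h2 := hcon.2
  rw [edist_dist] at hω h1 h2
  have h3 : ENNReal.ofReal (dist (f n ω + g n ω) (F ω + G ω)) < ε := by
    calc _ ≤ ENNReal.ofReal (dist (f n ω) (F ω) + dist (g n ω) (G ω)) :=
          ENNReal.ofReal_le_ofReal hd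
      _ ≤ ENNReal.ofReal (dist (f n ω) (F ω)) + ENNReal.ofReal (dist (g n ω) (G ω)) :=
          ENNReal.ofReal_add_le
      _ < ε / 2 + ε / 2 := ENNReal.add_lt_add h1 h2
      _ = ε := ENNReal.add_halves ε
  exact absurd hω (not_le.mpr h3)

lemma tim_const {a : ℕ → ℝ} {c : ℝ} (h : Tendsto a atTop (nhds c)) :
    TendstoInMeasure P (fun n (_ : Ω) => a n) atTop (fun _ => c) :=
  tendstoInMeasure_of_tendsto_ae (fun _ => aestronglyMeasurable_const)
    (Filter.Eventually.of_forall fun _ => h)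

lemma law_memℒp {σM : ℝ≥0} (hσM : σM ≠ 0) {X : Ω → ℝ} (hm : Measurable X)
    (hlaw : Measure.map X P = gaussianReal 0 (σM ^ 2)) : MemLp X 2 P := by
  have hv2 : (σM ^ 2 : ℝ≥0) ≠ 0 := pow_ne_zero _ hσM
  have := (memLp_map_measure_iff (μ := P) (f := X) (g := id)
    (by rw [hlaw]; exact aestronglyMeasurable_id) hm.aemeasurable).mp
    (by rw [hlaw]; exact memℒp_id_gauss hv2)
  exact this

lemma law_integral_zero {σM : ℝ≥0} (hσM : σM ≠ 0) {X : Ω → ℝ} (hm : Measurable X)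
    (hlaw : Measure.map X P = gaussianReal 0 (σM ^ 2)) : ∫ ω, X ω ∂P = 0 := by
  have hv2 : (σM ^ 2 : ℝ≥0) ≠ 0 := pow_ne_zero _ hσM
  have h := integral_map (φ := X) (f := fun y : ℝ => y) hm.aemeasurable
    (by rw [hlaw]; exact aestronglyMeasurable_id)
  rw [hlaw, integral_id_gauss hv2] at h
  exact h.symm

lemma law_integral_sq {σM : ℝ≥0} (hσM : σM ≠ 0) {X : Ω → ℝ} (hm : Measurable X)
    (hlaw : Measure.map X P = gaussianReal 0 (σM ^ 2)) :
    ∫ ω, X ω ^ 2 ∂P = (σM : ℝ) ^ 2 := by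
  have hv2 : (σM ^ 2 : ℝ≥0) ≠ 0 := pow_ne_zero _ hσM
  have h := integral_map (φ := X) (f := fun y : ℝ => y ^ 2) hm.aemeasurable
    (by rw [hlaw]; exact (measurable_id.pow_const 2).aestronglyMeasurable)
  rw [hlaw, integral_sq_gauss hv2] at h
  rw [h.symm]
  push_cast
  rfl

lemma law_variance {σM : ℝ≥0} (hσM : σM ≠ 0) {X : Ω → ℝ} (hm : Measurable X)
    (hlaw : Measure.map X P = gaussianReal 0 (σM ^ 2)) :
    variance X P = (σM : ℝ) ^ 2 := by
  rw [variance_eq_sub (law_memℒp hσM hm hlaw)]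
  have h1 : ∫ ω, (X ^ 2) ω ∂P = (σM : ℝ) ^ 2 := by
    simpa [Pi.pow_apply] using law_integral_sq hσM hm hlaw
  rw [h1, law_integral_zero hσM hm hlaw]
  ring

lemma tim_cross {σM : ℝ≥0} (hσM : σM ≠ 0)
    (X : ℕ → Ω → ℝ) (hmeas : ∀ i, Measurable (X i))
    (hindep : Pairwise fun i j => IndepFun (X i) (X j) P)
    (hlaw : ∀ i, Measure.map (X i) P = gaussianReal 0 (σM ^ 2))
    (θ : ℕ → ℝ) {C : ℝ}
    (hC : ∀ n : ℕ, (n : ℝ)⁻¹ * ∑ i ∈ Finset.range n, θ i ^ 2 ≤ C) :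
    TendstoInMeasure P
      (fun (n : ℕ) ω => (n : ℝ)⁻¹ * ∑ i ∈ Finset.range n, θ i * X i ω) atTop
      (fun _ => (0 : ℝ)) := by
  have hmem : ∀ i, MemLp (X i) 2 P := fun i => law_memℒp hσM (hmeas i) (hlaw i)
  have hmemt : ∀ i, MemLp (fun ω => θ i * X i ω) 2 P := fun i => (hmem i).const_mul _
  have hmemS : ∀ n : ℕ, MemLp (fun ω => ∑ i ∈ Finset.range n, θ i * X i ω) 2 P :=
    fun n => memLp_finset_sum (Finset.range n) (fun i _ => hmemt i)
  have hmemY : ∀ n : ℕ,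
      MemLp (fun ω => (n : ℝ)⁻¹ * ∑ i ∈ Finset.range n, θ i * X i ω) 2 P :=
    fun n => (hmemS n).const_mul _
  have hmean : ∀ n : ℕ,
      ∫ ω, (n : ℝ)⁻¹ * ∑ i ∈ Finset.range n, θ i * X i ω ∂P = 0 := by
    intro n
    rw [integral_const_mul, integral_finset_sum _
      (fun i _ => ((hmem i).integrable one_le_two).const_mul _)]
    have : ∀ i ∈ Finset.range n, ∫ ω, θ i * X i ω ∂P = 0 := by
      intro i _
      rw [integral_const_mul, law_integral_zero hσM (hmeas i) (hlaw i), mul_zero]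
    rw [Finset.sum_congr rfl this]
    simp
  have hC0 : 0 ≤ C := le_trans (by positivity) (hC 1)
  have hvarY : ∀ n : ℕ,
      variance (fun ω => (n : ℝ)⁻¹ * ∑ i ∈ Finset.range n, θ i * X i ω) P
        ≤ (n : ℝ)⁻¹ * (C * (σM : ℝ) ^ 2) := by
    intro n
    have hvS : variance (fun ω => ∑ i ∈ Finset.range n, θ i * X i ω) P
        = ∑ i ∈ Finset.range n, θ i ^ 2 * (σM : ℝ) ^ 2 := by
      have hsum : (fun ω => ∑ i ∈ Finset.range n, θ i * X i ω)
          = ∑ i ∈ Finset.range n, (fun ω => θ i * X i ω) := by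
        funext ω; simp
      rw [hsum, IndepFun.variance_sum (fun i _ => hmemt i)
        (fun i _ j _ hij => (hindep hij).comp
          (measurable_const_mul (θ i)) (measurable_const_mul (θ j)))]
      refine Finset.sum_congr rfl fun i _ => ?_
      rw [variance_const_mul, law_variance hσM (hmeas i) (hlaw i)]
    have : variance (fun ω => (n : ℝ)⁻¹ * ∑ i ∈ Finset.range n, θ i * X i ω) P
        = ((n : ℝ)⁻¹) ^ 2 * ∑ i ∈ Finset.range n, θ i ^ 2 * (σM : ℝ) ^ 2 := by
      rw [variance_const_mul, hvS]
    rw [this]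
    have h1 : ((n : ℝ)⁻¹) ^ 2 * ∑ i ∈ Finset.range n, θ i ^ 2 * (σM : ℝ) ^ 2
        = (n : ℝ)⁻¹ * (((n : ℝ)⁻¹ * ∑ i ∈ Finset.range n, θ i ^ 2) * (σM : ℝ) ^ 2) := by
      rw [← Finset.sum_mul]; ring
    rw [h1]
    apply mul_le_mul_of_nonneg_left _ (by positivity)
    exact mul_le_mul_of_nonneg_right (hC n) (by positivity)
  intro ε' hε'
  obtain ⟨ε, hε, hεε'⟩ : ∃ ε : ℝ, 0 < ε ∧ ENNReal.ofReal ε ≤ ε' := by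
    rcases eq_or_ne ε' ⊤ with h | h
    · exact ⟨1, one_pos, by simp [h]⟩
    · exact ⟨ε'.toReal, ENNReal.toReal_pos hε'.ne' h, by rw [ENNReal.ofReal_toReal h]⟩
  refine tendsto_of_tendsto_of_tendsto_of_le_of_le
    (h := fun n : ℕ => ENNReal.ofReal ((n : ℝ)⁻¹ * (C * (σM : ℝ) ^ 2) / ε ^ 2))
    tendsto_const_nhds ?_ (fun n => zero_le) (fun n => ?_)
  · -- upper bound tends to 0
    have hreal : Tendsto (fun n : ℕ => (n : ℝ)⁻¹ * (C * (σM : ℝ) ^ 2) / ε ^ 2)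
        atTop (nhds 0) := by
      have := tendsto_inv_atTop_nhds_zero_nat.mul_const ((C * (σM : ℝ) ^ 2) / ε ^ 2)
      rw [zero_mul] at this
      refine this.congr fun n => by ring
    have := ENNReal.tendsto_ofReal hreal
    simpa using this
  · -- Chebyshev bound
    have hcheb := meas_ge_le_variance_div_sq (hmemY n) hε
    have hset : {ω | ε ≤ dist ((fun ω => (n : ℝ)⁻¹ *
          ∑ i ∈ Finset.range n, θ i * X i ω) ω) ((fun _ => (0:ℝ)) ω)}
        = {ω | ε ≤ |(n : ℝ)⁻¹ * ∑ i ∈ Finset.range n, θ i * X i ω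
            - P[fun ω => (n : ℝ)⁻¹ * ∑ i ∈ Finset.range n, θ i * X i ω]|} := by
      ext ω
      simp only [Real.dist_eq, Set.mem_setOf_eq, hmean n, sub_zero]
    refine le_trans (measure_mono (t := {ω | ε ≤ dist ((fun ω => (n : ℝ)⁻¹ *
          ∑ i ∈ Finset.range n, θ i * X i ω) ω) ((fun _ => (0:ℝ)) ω)}) ?_) ?_
    · intro ω hω
      simp only [Set.mem_setOf_eq] at hω ⊢
      rw [edist_dist] at hω
      exact (ENNReal.ofReal_le_ofReal_iff dist_nonneg).mp (hεε'.trans hω)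
    rw [hset]
    refine le_trans hcheb (ENNReal.ofReal_le_ofReal ?_)
    exact div_le_div_of_nonneg_right (hvarY n) (by positivity) |>.trans_eq rfl

lemma tim_prod {σM : ℝ≥0} (hσM : σM ≠ 0) {L : ℕ} (e : ℕ × Fin L → Ω → ℝ)
    (he_indep : iIndepFun e P)
    (he_meas : ∀ il : ℕ × Fin L, Measurable (e il))
    (he_law : ∀ il : ℕ × Fin L, Measure.map (e il) P = gaussianReal 0 (σM ^ 2))
    (l l' : Fin L) :
    TendstoInMeasure P
      (fun (n : ℕ) ω => (n : ℝ)⁻¹ * ∑ i ∈ Finset.range n, e (i, l) ω * e (i, l') ω)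
      atTop (fun _ => (σM : ℝ) ^ 2 * (if l = l' then 1 else 0)) := by
  set Y : ℕ → Ω → ℝ := fun i ω => e (i, l) ω * e (i, l') ω with hY
  have hYmeas : ∀ i, Measurable (Y i) := fun i => (he_meas _).mul (he_meas _)
  have hint : Integrable (Y 0) P := by
    by_cases hll : l = l'
    · subst hll
      have := (law_memℒp hσM (he_meas (0, l)) (he_law (0, l))).integrable_sq
      apply this.congr
      filter_upwards with ω
      simp [hY, sq]
    · exact ((he_indep.indepFun (by simp [Prod.ext_iff, hll])).integrable_mul
        ((law_memℒp hσM (he_meas _) (he_law _)).integrable one_le_two)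
        ((law_memℒp hσM (he_meas _) (he_law _)).integrable one_le_two))
  have hpair : Pairwise (Function.onFun (IndepFun · · P) Y) := by
    intro i j hij
    by_cases hll : l = l'
    · subst hll
      exact (he_indep.indepFun (show ((i, l) : ℕ × Fin L) ≠ (j, l) by
        simp [Prod.ext_iff, hij])).comp
        (measurable_id.mul measurable_id) (measurable_id.mul measurable_id)
    · exact he_indep.indepFun_mul_mul he_meas (i, l) (i, l') (j, l) (j, l')
        (by simp [Prod.ext_iff, hij]) (by simp [Prod.ext_iff, hij])
        (by simp [Prod.ext_iff, hij]) (by simp [Prod.ext_iff, hij])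
  have hident : ∀ i, IdentDistrib (Y i) (Y 0) P P := by
    intro i
    by_cases hll : l = l'
    · subst hll
      have hid : IdentDistrib (e (i, l)) (e (0, l)) P P :=
        ⟨(he_meas _).aemeasurable, (he_meas _).aemeasurable,
          by rw [he_law, he_law]⟩
      exact hid.comp (measurable_id.mul measurable_id)
    · have hplaw : ∀ k : ℕ, Measure.map (fun ω => (e (k, l) ω, e (k, l') ω)) P
          = (gaussianReal 0 (σM ^ 2)).prod (gaussianReal 0 (σM ^ 2)) := by
        intro k
        have hind := he_indep.indepFun (show ((k, l) : ℕ × Fin L) ≠ (k, l') by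
          simp [Prod.ext_iff, hll])
        rw [(indepFun_iff_map_prod_eq_prod_map_map (he_meas _).aemeasurable
          (he_meas _).aemeasurable).mp hind, he_law, he_law]
      have hidp : IdentDistrib (fun ω => (e (i, l) ω, e (i, l') ω))
          (fun ω => (e (0, l) ω, e (0, l') ω)) P P :=
        ⟨((he_meas _).prodMk (he_meas _)).aemeasurable,
          ((he_meas _).prodMk (he_meas _)).aemeasurable,
          by rw [hplaw i, hplaw 0]⟩
      exact hidp.comp (measurable_fst.mul measurable_snd)
  have hmean : ∫ ω, Y 0 ω ∂P = (σM : ℝ) ^ 2 * (if l = l' then 1 else 0) := by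
    by_cases hll : l = l'
    · subst hll
      norm_num
      have := law_integral_sq hσM (he_meas (0, l)) (he_law (0, l))
      rw [← this]
      apply integral_congr_ae
      filter_upwards with ω
      simp [hY, sq]
    · have hind := he_indep.indepFun (show ((0, l) : ℕ × Fin L) ≠ (0, l') by
        simp [Prod.ext_iff, hll])
      have h := hind.integral_mul_eq_mul_integral (he_meas _).aestronglyMeasurable
        (he_meas _).aestronglyMeasurable
      simp only [if_neg hll, mul_zero]
      have h0 : ∫ ω, e (0, l) ω ∂P = 0 := law_integral_zero hσM (he_meas _) (he_law _)
      calc ∫ ω, Y 0 ω ∂P = ∫ ω, (e (0, l) * e (0, l')) ω ∂P := by rfl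
        _ = (∫ ω, e (0, l) ω ∂P) * ∫ ω, e (0, l') ω ∂P := h
        _ = 0 := by rw [h0, zero_mul]
  have hae := strong_law_ae_real Y hint hpair hident
  rw [hmean] at hae
  refine tendstoInMeasure_of_tendsto_ae (fun n => ?_) ?_
  · exact ((Finset.measurable_sum _ (fun i _ => hYmeas i)).const_mul
      _).aestronglyMeasurable
  · filter_upwards [hae] with ω hω
    refine hω.congr fun n => ?_
    rw [div_eq_inv_mul]

end Helpers

/-- **Gram-matrix law of large numbers (underlying Assumption 2(i) and Proposition 2).**
For an independent family `(e_{i,l})` of `N(0, σ_M²)` random variables and deterministic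
coefficients `θE` with `(1/n) Σ_{i<n} θE(i)(l) θE(i)(l') → H(l,l')`, the sequence
`(1/n) Σ_{i<n} (θE(i)(l) + e_{i,l})(θE(i)(l') + e_{i,l'})` converges in probability to
`H(l,l') + σ_M² 𝟙{l = l'}` for all `l, l'`. -/
theorem gram_matrix_lln
    {Ω : Type*} [MeasurableSpace Ω] (P : Measure Ω) [IsProbabilityMeasure P]
    {L : ℕ} (σM : NNReal) (hσM : 0 < σM)
    (e : ℕ × Fin L → Ω → ℝ)
    (he_indep : iIndepFun e P)
    (he_meas : ∀ il : ℕ × Fin L, Measurable (e il))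
    (he_law : ∀ il : ℕ × Fin L, Measure.map (e il) P = gaussianReal 0 (σM ^ 2))
    (θE : ℕ → Fin L → ℝ) (H : Matrix (Fin L) (Fin L) ℝ)
    (hθE : ∀ l l' : Fin L,
      Tendsto (fun n : ℕ => (n : ℝ)⁻¹ * ∑ i ∈ Finset.range n, θE i l * θE i l')
        atTop (nhds (H l l'))) :
    ∀ l l' : Fin L,
      TendstoInMeasure P
        (fun (n : ℕ) (ω : Ω) =>
          (n : ℝ)⁻¹ * ∑ i ∈ Finset.range n,
            (θE i l + e (i, l) ω) * (θE i l' + e (i, l') ω)) atTop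
        (fun _ => H l l' + (σM : ℝ) ^ 2 * (if l = l' then 1 else 0)) := by
  intro l l'
  have hσ : σM ≠ 0 := hσM.ne'
  -- bounds on the normalized sums of squares
  have hbdd : ∀ m : Fin L, ∃ C : ℝ, ∀ n : ℕ,
      (n : ℝ)⁻¹ * ∑ i ∈ Finset.range n, θE i m ^ 2 ≤ C := by
    intro m
    have hconv : Tendsto (fun n : ℕ => (n : ℝ)⁻¹ * ∑ i ∈ Finset.range n, θE i m ^ 2)
        atTop (nhds (H m m)) := by
      have := hθE m m
      refine this.congr fun n => ?_
      congr 1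
      exact Finset.sum_congr rfl fun i _ => by rw [sq]
    obtain ⟨C, hC⟩ := hconv.bddAbove_range
    exact ⟨C, fun n => hC (Set.mem_range_self n)⟩
  obtain ⟨C1, hC1⟩ := hbdd l
  obtain ⟨C2, hC2⟩ := hbdd l'
  -- the four pieces
  have h1 : TendstoInMeasure P
      (fun (n : ℕ) (_ : Ω) => (n : ℝ)⁻¹ * ∑ i ∈ Finset.range n, θE i l * θE i l')
      atTop (fun _ => H l l') := tim_const (hθE l l')
  have h2 : TendstoInMeasure P
      (fun (n : ℕ) ω => (n : ℝ)⁻¹ * ∑ i ∈ Finset.range n, θE i l * e (i, l') ω)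
      atTop (fun _ => (0 : ℝ)) :=
    tim_cross hσ (fun i => e (i, l')) (fun i => he_meas _)
      (fun i j hij => he_indep.indepFun (by simp [Prod.ext_iff, hij]))
      (fun i => he_law _) (fun i => θE i l) hC1
  have h3 : TendstoInMeasure P
      (fun (n : ℕ) ω => (n : ℝ)⁻¹ * ∑ i ∈ Finset.range n, θE i l' * e (i, l) ω)
      atTop (fun _ => (0 : ℝ)) :=
    tim_cross hσ (fun i => e (i, l)) (fun i => he_meas _)
      (fun i j hij => he_indep.indepFun (by simp [Prod.ext_iff, hij]))
      (fun i => he_law _) (fun i => θE i l') hC2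
  have h4 := tim_prod hσ e he_indep he_meas he_law l l'
  have hsum := tim_add (tim_add (tim_add h1 h2) h3) h4
  refine TendstoInMeasure.congr (fun n => Filter.Eventually.of_forall fun ω => ?_)
    (Filter.Eventually.of_forall fun ω => ?_) hsum
  · -- left congruence
    dsimp only
    rw [← mul_add, ← mul_add, ← mul_add, ← Finset.sum_add_distrib,
      ← Finset.sum_add_distrib, ← Finset.sum_add_distrib]
    congr 1
    exact Finset.sum_congr rfl fun i _ => by ring
  · simp
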